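/- Let 1 < p₀ < p ≤ ∞ and set a = (1/p₀ − 1/p)/(1 + 1/p₀). There exists a constant C > 0 such that for every C¹ function v : ℝ → ℝ with v ∈ L^{p₀}(ℝ) and v′ ∈ L^∞(ℝ), one has ‖v‖_{L^p(ℝ)} ≤ C ‖v′‖_{L^∞(ℝ)}^{a} ‖v‖_{L^{p₀}(ℝ)}^{1−a}. -/

import Mathlib

open MeasureTheory Real Set Filter
open scoped ENNReal

lemma cont_norm_le_of_ae_le {f : ℝ → ℝ} (hf : Continuous f) {M : ℝ}
    (h : ∀ᵐ x ∂(volume : Measure ℝ), ‖f x‖ ≤ M) : ∀ x, ‖f x‖ ≤ M := by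
  have hU : IsOpen {y : ℝ | M < ‖f y‖} := isOpen_lt continuous_const hf.norm
  have h0 : volume {y : ℝ | M < ‖f y‖} = 0 := by
    have := ae_iff.1 h
    simpa [not_le] using this
  have := hU.eq_empty_of_measure_zero h0
  intro x
  by_contra hx
  exact absurd this (Set.nonempty_iff_ne_empty.1 ⟨x, not_le.1 hx⟩)

lemma gn_pointwise {v : ℝ → ℝ} (hv : ContDiff ℝ 1 v) {p₀ M : ℝ} (hp₀ : 0 < p₀)
    (hM : 0 < M) (hd : ∀ x, ‖deriv v x‖ ≤ M) (x : ℝ) :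
    ENNReal.ofReal ((|v x| / 2) ^ p₀ * (|v x| / (2 * M))) ≤
      ∫⁻ t, (‖v t‖₊ : ℝ≥0∞) ^ p₀ ∂volume := by
  rcases eq_or_lt_of_le (abs_nonneg (v x)) with hc | hc
  · rw [← hc]
    simp
  set c := |v x| with hcdef
  set δ := c / (2 * M) with hδdef
  have hδ : 0 < δ := by positivity
  have hlow : ∀ t ∈ Icc x (x + δ), c / 2 ≤ |v t| := by
    intro t ht
    have hdiff : ‖v t - v x‖ ≤ M * ‖t - x‖ :=
      convex_univ.norm_image_sub_le_of_norm_deriv_le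
        (fun y _ => (hv.differentiable one_ne_zero) y) (fun y _ => hd y)
        trivial trivial
    have h1 : ‖t - x‖ ≤ δ := by
      rw [Real.norm_eq_abs, abs_of_nonneg (by linarith [ht.1])]
      linarith [ht.2]
    have h2 : |v t - v x| ≤ M * δ := le_trans hdiff (by
      have := mul_le_mul_of_nonneg_left h1 hM.le
      simpa using this)
    have hMδ : M * δ = c / 2 := by
      field_simp [hδdef]
      rw [hδdef]; field_simp
    have := abs_sub_abs_le_abs_sub (v x) (v t)
    rw [abs_sub_comm] at this
    calc c / 2 = c - c / 2 := by ring
    _ ≤ c - |v t - v x| := by rw [← hMδ] at *; linarith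
    _ ≤ |v t| := by linarith [this]
  calc ENNReal.ofReal ((c / 2) ^ p₀ * δ)
      = ENNReal.ofReal ((c / 2) ^ p₀) * ENNReal.ofReal δ := by
        rw [ENNReal.ofReal_mul (by positivity)]
    _ = ENNReal.ofReal ((c / 2) ^ p₀) * volume (Icc x (x + δ)) := by
        rw [Real.volume_Icc]; ring_nf
    _ = ∫⁻ _ in Icc x (x + δ), ENNReal.ofReal ((c / 2) ^ p₀) ∂volume := by
        rw [setLIntegral_const]
    _ ≤ ∫⁻ t in Icc x (x + δ), (‖v t‖₊ : ℝ≥0∞) ^ p₀ ∂volume := by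
        apply setLIntegral_mono (ENNReal.continuous_rpow_const.comp (ENNReal.continuous_coe.comp hv.continuous.nnnorm)).measurable ?_
        intro t ht
        rw [← ENNReal.ofReal_rpow_of_nonneg (by positivity) hp₀.le]
        have h2 : ENNReal.ofReal |v t| = (‖v t‖₊ : ℝ≥0∞) := by
          rw [← Real.norm_eq_abs, (ofReal_norm _).trans (enorm_eq_nnnorm _)]
        show ENNReal.ofReal (c / 2) ^ p₀ ≤ (‖v t‖₊ : ℝ≥0∞) ^ p₀
        rw [← h2]
        exact ENNReal.rpow_le_rpow (ENNReal.ofReal_le_ofReal (hlow t ht)) hp₀.le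
    _ ≤ ∫⁻ t, (‖v t‖₊ : ℝ≥0∞) ^ p₀ ∂volume := setLIntegral_le_lintegral _ _

lemma gn_c_bound {c M Np p₀ : ℝ} (hp₀ : 0 < p₀) (hM : 0 < M) (hc : 0 ≤ c)
    (h : (c / 2) ^ p₀ * (c / (2 * M)) ≤ Np) :
    c ≤ (2 ^ (p₀ + 1) * M * Np) ^ (1 / (p₀ + 1)) := by
  have hNp : 0 ≤ Np := le_trans (by positivity) h
  rcases eq_or_lt_of_le hc with hc0 | hc0
  · rw [← hc0]; positivity
  have h2p : (0:ℝ) < 2 ^ p₀ := by positivity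
  have key : c ^ (p₀ + 1) ≤ 2 ^ (p₀ + 1) * M * Np := by
    have e1 : c ^ (p₀ + 1) = c ^ p₀ * c := by
      rw [Real.rpow_add hc0, Real.rpow_one]
    have e2 : (2:ℝ) ^ (p₀ + 1) = 2 ^ p₀ * 2 := by
      rw [Real.rpow_add (by norm_num), Real.rpow_one]
    have e3 : (c / 2) ^ p₀ = c ^ p₀ / 2 ^ p₀ := Real.div_rpow hc (by norm_num : (0:ℝ) ≤ 2) p₀
    rw [e1, e2]
    rw [e3] at h
    have := mul_le_mul_of_nonneg_right h (le_of_lt (by positivity : (0:ℝ) < 2 ^ p₀ * (2 * M)))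
    calc c ^ p₀ * c = c ^ p₀ / 2 ^ p₀ * (c / (2 * M)) * (2 ^ p₀ * (2 * M)) := by
          field_simp
      _ ≤ Np * (2 ^ p₀ * (2 * M)) := this
      _ = 2 ^ p₀ * 2 * M * Np := by ring
  calc c = (c ^ (p₀ + 1)) ^ (1 / (p₀ + 1)) := by
        rw [one_div, Real.rpow_rpow_inv hc (by positivity)]
    _ ≤ (2 ^ (p₀ + 1) * M * Np) ^ (1 / (p₀ + 1)) :=
        Real.rpow_le_rpow (by positivity) key (by positivity)

lemma gn_B_eq {M N p₀ : ℝ} (hp₀ : 0 < p₀) (hM : 0 ≤ M) (hN : 0 ≤ N) :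
    (2 ^ (p₀ + 1) * M * N ^ p₀) ^ (1 / (p₀ + 1)) =
      2 * M ^ (1 / (p₀ + 1)) * N ^ (p₀ / (p₀ + 1)) := by
  have h1 : (0:ℝ) ≤ 2 ^ (p₀ + 1) := by positivity
  rw [Real.mul_rpow (by positivity) (by positivity), Real.mul_rpow h1 hM]
  congr 1
  · congr 1
    rw [← Real.rpow_mul (by norm_num), mul_one_div, div_self (by positivity), Real.rpow_one]
  · rw [← Real.rpow_mul hN, mul_one_div]

lemma gn_key_real {M N p₀ q : ℝ} (hp₀ : 0 < p₀) (hq : p₀ < q) (hM : 0 < M) (hN : 0 < N) :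
    ((2 * M ^ (1 / (p₀ + 1)) * N ^ (p₀ / (p₀ + 1))) ^ (q - p₀) * N ^ p₀) ^ (1 / q) ≤
      2 * M ^ ((1 / p₀ - 1 / q) / (1 + 1 / p₀)) *
        N ^ (1 - (1 / p₀ - 1 / q) / (1 + 1 / p₀)) := by
  have hq0 : 0 < q := lt_trans hp₀ hq
  have hp₁ : (0:ℝ) < p₀ + 1 := by linarith
  have ha : (1 / p₀ - 1 / q) / (1 + 1 / p₀) = (q - p₀) / (q * (p₀ + 1)) := by
    rw [div_eq_div_iff (by positivity) (by positivity)]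
    field_simp
  rw [ha]
  have e0 : (2 * M ^ (1 / (p₀ + 1)) * N ^ (p₀ / (p₀ + 1))) ^ (q - p₀) =
      2 ^ (q - p₀) * M ^ (1 / (p₀ + 1) * (q - p₀)) * N ^ (p₀ / (p₀ + 1) * (q - p₀)) := by
    rw [Real.mul_rpow (by positivity) (by positivity),
      Real.mul_rpow (by positivity) (by positivity),
      ← Real.rpow_mul hM.le, ← Real.rpow_mul hN.le]
  rw [e0, mul_assoc, ← Real.rpow_add hN,
    Real.mul_rpow (by positivity) (by positivity),
    Real.mul_rpow (by positivity) (by positivity),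
    ← Real.rpow_mul (by norm_num : (0:ℝ) ≤ 2),
    ← Real.rpow_mul hM.le, ← Real.rpow_mul hN.le]
  have eM : 1 / (p₀ + 1) * (q - p₀) * (1 / q) = (q - p₀) / (q * (p₀ + 1)) := by
    field_simp
  have eN : (p₀ / (p₀ + 1) * (q - p₀) + p₀) * (1 / q) = 1 - (q - p₀) / (q * (p₀ + 1)) := by
    field_simp
    ring
  rw [eM, eN]
  have e2 : (2:ℝ) ^ ((q - p₀) * (1 / q)) ≤ 2 := by
    nth_rewrite 2 [← Real.rpow_one 2]
    apply Real.rpow_le_rpow_of_exponent_le one_le_two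
    rw [mul_one_div, div_le_one hq0]
    linarith
  have : (0:ℝ) ≤ M ^ ((q - p₀) / (q * (p₀ + 1))) := by positivity
  apply mul_le_mul_of_nonneg_right _ (by positivity)
  exact mul_le_mul_of_nonneg_right e2 this


/-- One-dimensional Gagliardo--Nirenberg inequality:
`‖v‖_p ≤ C ‖v'‖_∞^a ‖v‖_(p₀)^(1-a)` with `a = (1/p₀ - 1/p)/(1 + 1/p₀)`,
for `1 < p₀ < p ≤ ∞`. -/
theorem gagliardo_nirenberg_1d (p₀ : ℝ) (hp₀ : 1 < p₀)
    (p : ℝ≥0∞) (hp : ENNReal.ofReal p₀ < p) :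
    ∃ C > (0:ℝ), ∀ v : ℝ → ℝ, ContDiff ℝ 1 v →
      MemLp v (ENNReal.ofReal p₀) volume → MemLp (deriv v) ⊤ volume →
      eLpNorm v p volume ≤
        ENNReal.ofReal C *
          eLpNorm (deriv v) ⊤ volume ^ ((1 / p₀ - 1 / p.toReal) / (1 + 1 / p₀)) *
          eLpNorm v (ENNReal.ofReal p₀) volume ^
            (1 - (1 / p₀ - 1 / p.toReal) / (1 + 1 / p₀)) := by
  have hp₀0 : (0:ℝ) < p₀ := by linarith
  have hp₀ne : ENNReal.ofReal p₀ ≠ 0 := (ENNReal.ofReal_pos.2 hp₀0).ne'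
  refine ⟨2, by norm_num, ?_⟩
  intro v hv hv0 hv'
  set a := (1 / p₀ - 1 / p.toReal) / (1 + 1 / p₀) with ha_def
  by_cases hvz : v = 0
  · subst hvz
    simp only [eLpNorm_zero]
    exact zero_le
  -- nondegeneracy
  have hNne : eLpNorm v (ENNReal.ofReal p₀) volume ≠ 0 := by
    intro h
    exact hvz ((Continuous.ae_eq_iff_eq volume hv.continuous continuous_const).1
      ((eLpNorm_eq_zero_iff hv.continuous.aestronglyMeasurable hp₀ne).1 h))
  have hMne : eLpNorm (deriv v) ⊤ volume ≠ 0 := by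
    intro h
    have hd0 : deriv v = 0 :=
      (Continuous.ae_eq_iff_eq volume (hv.continuous_deriv le_rfl) continuous_const).1
        ((eLpNorm_eq_zero_iff (hv.continuous_deriv le_rfl).aestronglyMeasurable
          (by simp)).1 h)
    have hconst : v = fun _ => v 0 := by
      funext x
      exact is_const_of_deriv_eq_zero (hv.differentiable one_ne_zero)
        (fun t => by rw [hd0]; rfl) x 0
    by_cases hc0 : v 0 = 0
    · exact hvz (by rw [hconst, hc0]; rfl)
    · have hfin := hv0.2
      rw [hconst] at hfin
      rw [eLpNorm_const (v 0) hp₀ne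
          (by rw [← Measure.measure_univ_ne_zero, Real.volume_univ]; simp)] at hfin
      rw [Real.volume_univ, ENNReal.toReal_ofReal hp₀0.le,
        ENNReal.top_rpow_of_pos (by positivity), ENNReal.mul_top (by simpa using hc0)] at hfin
      exact absurd hfin (by simp)
  set Mt := eLpNorm (deriv v) ⊤ volume with hMtdef
  set Nt := eLpNorm v (ENNReal.ofReal p₀) volume with hNtdef
  set M := Mt.toReal with hMdef
  set N := Nt.toReal with hNdef
  have hMfin : Mt ≠ ⊤ := hv'.2.ne
  have hNfin : Nt ≠ ⊤ := hv0.2.ne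
  have hMpos : 0 < M := ENNReal.toReal_pos hMne hMfin
  have hNpos : 0 < N := ENNReal.toReal_pos hNne hNfin
  have hMofReal : ENNReal.ofReal M = Mt := ENNReal.ofReal_toReal hMfin
  have hNofReal : ENNReal.ofReal N = Nt := ENNReal.ofReal_toReal hNfin
  have hd : ∀ x, ‖deriv v x‖ ≤ M := by
    apply cont_norm_le_of_ae_le (hv.continuous_deriv le_rfl)
    filter_upwards [ae_le_eLpNormEssSup (f := deriv v) (μ := volume)] with x hx
    have hx' : (‖deriv v x‖₊ : ℝ≥0∞) ≤ Mt := by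
      rw [hMtdef, eLpNorm_exponent_top]; exact hx
    calc ‖deriv v x‖ = ((‖deriv v x‖₊ : ℝ≥0∞)).toReal := by simp
      _ ≤ M := ENNReal.toReal_mono hMfin hx'
  set I := ∫⁻ t, (‖v t‖₊ : ℝ≥0∞) ^ p₀ ∂volume with hIdef
  have hIeq : I = Nt ^ p₀ := by
    have h1 : Nt = I ^ (1 / p₀) := by
      rw [hNtdef, eLpNorm_eq_lintegral_rpow_enorm_toReal hp₀ne ENNReal.ofReal_ne_top,
        ENNReal.toReal_ofReal hp₀0.le]
      rfl
    rw [h1, ← ENNReal.rpow_mul, one_div, inv_mul_cancel₀ hp₀0.ne', ENNReal.rpow_one]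
  have hIofReal : I = ENNReal.ofReal (N ^ p₀) := by
    rw [hIeq, ← hNofReal, ENNReal.ofReal_rpow_of_nonneg hNpos.le hp₀0.le]
  set B := (2 ^ (p₀ + 1) * M * N ^ p₀) ^ (1 / (p₀ + 1)) with hBdef
  have hvB : ∀ x, ‖v x‖ ≤ B := by
    intro x
    rw [Real.norm_eq_abs]
    apply gn_c_bound hp₀0 hMpos (abs_nonneg _)
    have h1 := gn_pointwise hv hp₀0 hMpos hd x
    rw [← hIdef, hIofReal] at h1
    exact (ENNReal.ofReal_le_ofReal_iff (by positivity)).1 h1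
  have hBexp : B = 2 * M ^ (1 / (p₀ + 1)) * N ^ (p₀ / (p₀ + 1)) :=
    gn_B_eq hp₀0 hMpos.le hNpos.le
  have hsup : eLpNorm v ⊤ volume ≤ ENNReal.ofReal B := by
    rw [eLpNorm_exponent_top]
    exact eLpNormEssSup_le_of_ae_bound (ae_of_all _ hvB)
  by_cases hptop : p = ⊤
  · subst hptop
    have haval : a = 1 / (p₀ + 1) := by
      rw [ha_def]
      rw [ENNReal.toReal_top, div_zero, sub_zero, div_eq_div_iff (by positivity) (by positivity)]
      field_simp
    have ha1 : 1 - a = p₀ / (p₀ + 1) := by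
      rw [haval, eq_div_iff (by positivity : (p₀:ℝ) + 1 ≠ 0)]
      field_simp
      ring
    calc eLpNorm v ⊤ volume ≤ ENNReal.ofReal B := hsup
      _ = ENNReal.ofReal 2 * Mt ^ a * Nt ^ (1 - a) := by
          rw [hBexp, ha1, haval, ENNReal.ofReal_mul (by positivity),
            ENNReal.ofReal_mul (by norm_num), ← hMofReal, ← hNofReal,
            ← ENNReal.ofReal_rpow_of_nonneg hMpos.le (by positivity),
            ← ENNReal.ofReal_rpow_of_nonneg hNpos.le (by positivity)]
  · have hq : p₀ < p.toReal := by
      have h := (ENNReal.toReal_lt_toReal ENNReal.ofReal_ne_top hptop).2 hp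
      rwa [ENNReal.toReal_ofReal hp₀0.le] at h
    set q := p.toReal with hqdef
    have hq0 : 0 < q := lt_trans hp₀0 hq
    have hpne0 : p ≠ 0 := (lt_of_lt_of_le (ENNReal.ofReal_pos.2 hp₀0) hp.le).ne'
    have ha_nonneg : 0 ≤ a := by
      rw [ha_def]
      apply div_nonneg _ (by positivity)
      rw [sub_nonneg]
      exact one_div_le_one_div_of_le hp₀0 hq.le
    have h1a_nonneg : 0 ≤ 1 - a := by
      rw [ha_def, sub_nonneg]
      rw [div_le_one (by positivity)]
      have : (0:ℝ) < 1 / q := by positivity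
      linarith
    have hJ : ∫⁻ t, (‖v t‖₊ : ℝ≥0∞) ^ q ∂volume ≤ ENNReal.ofReal (B ^ (q - p₀)) * I := by
      rw [hIdef, ← lintegral_const_mul' _ _ ENNReal.ofReal_ne_top]
      apply lintegral_mono
      intro t
      have h2 : ENNReal.ofReal |v t| = (‖v t‖₊ : ℝ≥0∞) := by
        rw [← Real.norm_eq_abs, (ofReal_norm _).trans (enorm_eq_nnnorm _)]
      calc (‖v t‖₊ : ℝ≥0∞) ^ q = ENNReal.ofReal (|v t| ^ q) := by
            rw [← h2, ENNReal.ofReal_rpow_of_nonneg (abs_nonneg _) hq0.le]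
        _ ≤ ENNReal.ofReal (B ^ (q - p₀) * |v t| ^ p₀) := by
            apply ENNReal.ofReal_le_ofReal
            have e1 : |v t| ^ q = |v t| ^ (q - p₀) * |v t| ^ p₀ := by
              rw [← Real.rpow_add_of_nonneg (abs_nonneg _) (by linarith) hp₀0.le]
              ring_nf
            rw [e1]
            exact mul_le_mul_of_nonneg_right
              (Real.rpow_le_rpow (abs_nonneg _) (by simpa using hvB t) (by linarith))
              (by positivity)
        _ = ENNReal.ofReal (B ^ (q - p₀)) * (‖v t‖₊ : ℝ≥0∞) ^ p₀ := by
            rw [ENNReal.ofReal_mul (by positivity), ← h2,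
              ENNReal.ofReal_rpow_of_nonneg (abs_nonneg _) hp₀0.le]
    have hLHS : eLpNorm v p volume = (∫⁻ t, (‖v t‖₊ : ℝ≥0∞) ^ q ∂volume) ^ (1 / q) :=
      eLpNorm_eq_lintegral_rpow_enorm_toReal hpne0 hptop
    calc eLpNorm v p volume ≤ (ENNReal.ofReal (B ^ (q - p₀)) * I) ^ (1 / q) := by
          rw [hLHS]; exact ENNReal.rpow_le_rpow hJ (by positivity)
      _ = ENNReal.ofReal ((B ^ (q - p₀) * N ^ p₀) ^ (1 / q)) := by
          rw [hIofReal, ← ENNReal.ofReal_mul (by positivity),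
            ENNReal.ofReal_rpow_of_nonneg (by positivity) (by positivity)]
      _ ≤ ENNReal.ofReal (2 * M ^ a * N ^ (1 - a)) := by
          apply ENNReal.ofReal_le_ofReal
          rw [hBexp, ha_def]
          exact gn_key_real hp₀0 hq hMpos hNpos
      _ = ENNReal.ofReal 2 * Mt ^ a * Nt ^ (1 - a) := by
          rw [ENNReal.ofReal_mul (by positivity), ENNReal.ofReal_mul (by norm_num),
            ← hMofReal, ← hNofReal,
            ← ENNReal.ofReal_rpow_of_nonneg hMpos.le ha_nonneg,
            ← ENNReal.ofReal_rpow_of_nonneg hNpos.le h1a_nonneg]
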